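/- Let L ⊆ S^k and M the cone over L. If M is LNE, then L has only finitely many path-connected components. -/

import Mathlib

open Set Metric Filter Topology Pointwise

noncomputable def innerDist {E : Type*} [NormedAddCommGroup E] (Z : Set E) (x y : E) : ENNReal :=
  ⨅ (γ : ℝ → E) (_ : ContinuousOn γ (Set.Icc 0 1)) (_ : Set.MapsTo γ (Set.Icc 0 1) Z)
    (_ : γ 0 = x) (_ : γ 1 = y), eVariationOn γ (Set.Icc 0 1)

def IsLNE {E : Type*} [NormedAddCommGroup E] (Z : Set E) (C : ℝ) : Prop :=
  ∀ x ∈ Z, ∀ y ∈ Z, innerDist Z x y ≤ ENNReal.ofReal (C * ‖x - y‖)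

/-- The cone over a subset `L` of the unit sphere. -/
def coneOver {E : Type*} [NormedAddCommGroup E] [NormedSpace ℝ E] (L : Set E) : Set E :=
  {p | ∃ x ∈ L, ∃ t : ℝ, 0 ≤ t ∧ p = t • x}

section Aux

variable {E : Type*} [NormedAddCommGroup E] [NormedSpace ℝ E]

lemma mem_coneOver_of_mem {L : Set E} {x : E} (hx : x ∈ L) : x ∈ coneOver L :=
  ⟨x, hx, 1, zero_le_one, (one_smul ℝ x).symm⟩

/-- If the cone point of a nonzero element of the cone: the normalization lies in `L`. -/
lemma normalize_mem {L : Set E} (hL : ∀ z ∈ L, ‖z‖ = 1) {p : E}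
    (hp : p ∈ coneOver L) (hp0 : p ≠ 0) : ‖p‖⁻¹ • p ∈ L := by
  obtain ⟨z, hz, t, ht, rfl⟩ := hp
  have hz1 : ‖z‖ = 1 := hL z hz
  have ht0 : t ≠ 0 := by
    rintro rfl; simp at hp0
  have hnorm : ‖t • z‖ = t := by
    rw [norm_smul, hz1, mul_one, Real.norm_eq_abs, abs_of_nonneg ht]
  rw [hnorm, smul_smul, inv_mul_cancel₀ ht0, one_smul]
  exact hz

/-- Key separation lemma: non-joined points of `L` are far apart. -/
lemma sep_lemma {L : Set E} (hL : ∀ z ∈ L, ‖z‖ = 1) {C : ℝ} (hC : 1 ≤ C)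
    (hLNE : IsLNE (coneOver L) C) {x y : E} (hx : x ∈ L) (hy : y ∈ L)
    (hxy : ¬ JoinedIn L x y) : 2 / C ≤ dist x y := by
  have hC0 : 0 < C := lt_of_lt_of_le one_pos hC
  -- first : 2 ≤ innerDist
  have key : (2 : ENNReal) ≤ innerDist (coneOver L) x y := by
    rw [innerDist]
    refine le_iInf fun γ => le_iInf fun hcont => le_iInf fun hmaps =>
      le_iInf fun h0 => le_iInf fun h1 => ?_
    by_cases hzero : ∃ s ∈ Set.Icc (0:ℝ) 1, γ s = 0
    · obtain ⟨s, hs, hγs⟩ := hzero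
      -- variation ≥ edist x 0 + edist 0 y = 2
      set u : ℕ → ℝ := fun i => if i = 0 then 0 else if i = 1 then s else 1 with hu_def
      have hu : Monotone u := by
        intro i j hij
        rcases Nat.eq_or_lt_of_le hij with rfl | hij
        · exact le_refl _
        simp only [hu_def]
        split_ifs with h1' h2' h3' h4' h5' <;>
          first
          | omega
          | exact hs.1
          | exact le_refl _
          | exact hs.2
          | exact zero_le_one
          | exact hs.1.trans hs.2
      have us : ∀ i, u i ∈ Set.Icc (0:ℝ) 1 := by
        intro i
        simp only [hu_def]
        split_ifs
        · exact ⟨le_refl _, zero_le_one⟩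
        · exact hs
        · exact ⟨zero_le_one, le_refl _⟩
      have hsum := eVariationOn.sum_le (f := γ) (n := 2) hu us
      have hu0 : u 0 = 0 := by simp [hu_def]
      have hu1 : u 1 = s := by simp [hu_def]
      have hu2 : u 2 = 1 := by simp [hu_def]
      rw [Finset.sum_range_succ, Finset.sum_range_one, hu0, hu1, hu2, h0, h1, hγs] at hsum
      have hxn : ‖x‖ = 1 := hL x hx
      have hyn : ‖y‖ = 1 := hL y hy
      have e1 : edist (0 : E) x = 1 := by
        rw [edist_comm, edist_eq_enorm_sub, sub_zero]
        rw [← ofReal_norm, hxn, ENNReal.ofReal_one]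
      have e2 : edist y (0 : E) = 1 := by
        rw [edist_eq_enorm_sub, sub_zero]
        rw [← ofReal_norm, hyn, ENNReal.ofReal_one]
      rw [e1, e2] at hsum
      calc (2 : ENNReal) = 1 + 1 := by norm_num
        _ ≤ eVariationOn γ (Set.Icc 0 1) := hsum
    · -- γ never hits 0, so x and y are joined in L: contradiction
      push_neg at hzero
      exfalso
      apply hxy
      set ν : ℝ → E := fun t => ‖γ t‖⁻¹ • γ t with hν_def
      have hνcont : ContinuousOn ν (Set.Icc 0 1) := by
        apply ContinuousOn.smul _ hcont
        exact (hcont.norm.inv₀ (fun t ht => norm_ne_zero_iff.2 (hzero t ht)))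
      have hνmem : ∀ t ∈ Set.Icc (0:ℝ) 1, ν t ∈ L := fun t ht =>
        normalize_mem hL (hmaps ht) (hzero t ht)
      have hν0 : ν 0 = x := by
        simp only [hν_def, h0, hL x hx]
        norm_num
      have hν1 : ν 1 = y := by
        simp only [hν_def, h1, hL y hy]
        norm_num
      -- build a path
      have hI : (0:ℝ) ∈ Set.Icc (0:ℝ) 1 := by norm_num
      have hI1 : (1:ℝ) ∈ Set.Icc (0:ℝ) 1 := by norm_num
      refine ⟨⟨⟨fun t => ν (t : ℝ), ?_⟩, ?_, ?_⟩, ?_⟩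
      · exact continuousOn_iff_continuous_restrict.1 hνcont
      · simpa using hν0
      · simpa using hν1
      · intro t
        exact hνmem t t.2
  have := le_trans key (hLNE x (mem_coneOver_of_mem hx) y (mem_coneOver_of_mem hy))
  have h2 : (2:ℝ) ≤ C * ‖x - y‖ := by
    have h' : ENNReal.ofReal 2 ≤ ENNReal.ofReal (C * ‖x - y‖) := by
      rw [ENNReal.ofReal_ofNat]; exact this
    exact (ENNReal.ofReal_le_ofReal_iff (mul_nonneg hC0.le (norm_nonneg _))).1 h'
  rw [dist_eq_norm, div_le_iff₀ hC0]
  linarith [h2, mul_comm C ‖x - y‖]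

end Aux

theorem stmt_3 {k : ℕ} (L : Set (EuclideanSpace ℝ (Fin (k + 1))))
    (hL : L ⊆ Metric.sphere (0 : EuclideanSpace ℝ (Fin (k + 1))) 1)
    (C : ℝ) (hC : 1 ≤ C) (hLNE : IsLNE (coneOver L) C) :
    ∃ S : Set (EuclideanSpace ℝ (Fin (k + 1))), S.Finite ∧ S ⊆ L ∧
      ∀ x ∈ L, ∃ s ∈ S, JoinedIn L x s := by
  have hC0 : 0 < C := lt_of_lt_of_le one_pos hC
  have hLnorm : ∀ z ∈ L, ‖z‖ = 1 := by
    intro z hz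
    have := hL hz
    simpa [dist_eq_norm] using this
  -- setoid of path components
  let st : Setoid ↥L := ⟨fun a b => JoinedIn L a b,
    fun a => JoinedIn.refl a.2, JoinedIn.symm, JoinedIn.trans⟩
  let rep : Quotient st → EuclideanSpace ℝ (Fin (k + 1)) := fun q => (q.out : EuclideanSpace ℝ (Fin (k + 1)))
  set S : Set (EuclideanSpace ℝ (Fin (k + 1))) := Set.range rep with hS_def
  have hSL : S ⊆ L := by
    rintro _ ⟨q, rfl⟩
    exact q.out.2
  have hsep : ∀ s₁ ∈ S, ∀ s₂ ∈ S, s₁ ≠ s₂ → 2 / C ≤ dist s₁ s₂ := by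
    rintro _ ⟨q₁, rfl⟩ _ ⟨q₂, rfl⟩ hne
    refine sep_lemma hLnorm hC hLNE q₁.out.2 q₂.out.2 ?_
    intro hj
    apply hne
    have : q₁ = q₂ := by
      rw [← Quotient.out_eq q₁, ← Quotient.out_eq q₂]
      exact Quotient.sound hj
    rw [this]
  refine ⟨S, ?_, hSL, ?_⟩
  · -- finiteness via total boundedness of the sphere
    have hcomp : IsCompact (Metric.sphere (0 : EuclideanSpace ℝ (Fin (k + 1))) 1) := isCompact_sphere 0 1
    have htb := hcomp.totallyBounded
    rw [Metric.totallyBounded_iff] at htb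
    obtain ⟨t, htfin, htcov⟩ := htb (1 / (2 * C)) (by positivity)
    classical
    set f : EuclideanSpace ℝ (Fin (k + 1)) → EuclideanSpace ℝ (Fin (k + 1)) := fun s => if h : ∃ y ∈ t, s ∈ Metric.ball y (1 / (2 * C))
      then h.choose else 0 with hf_def
    have hmemf : ∀ s ∈ S, f s ∈ t ∧ s ∈ Metric.ball (f s) (1 / (2 * C)) := by
      intro s hs
      have hssph : s ∈ Metric.sphere (0 : EuclideanSpace ℝ (Fin (k + 1))) 1 := hL (hSL hs)
      have := htcov hssph
      simp only [Set.mem_iUnion] at this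
      obtain ⟨y, hy, hmem⟩ := this
      have hex : ∃ y ∈ t, s ∈ Metric.ball y (1 / (2 * C)) := ⟨y, hy, hmem⟩
      simp only [hf_def, dif_pos hex]
      exact ⟨hex.choose_spec.1, hex.choose_spec.2⟩
    have hinj : Set.InjOn f S := by
      intro a ha b hb hab
      by_contra hne
      have h2C := hsep a ha b hb hne
      have ha' := (hmemf a ha).2
      have hb' := (hmemf b hb).2
      rw [hab] at ha'
      have : dist a b < 1 / C := by
        calc dist a b ≤ dist a (f b) + dist b (f b) := dist_triangle_right _ _ _
          _ < 1 / (2 * C) + 1 / (2 * C) := add_lt_add ha' hb'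
          _ = 1 / C := by
              rw [← add_div, one_add_one_eq_two, mul_comm, ← div_div,
                div_div_cancel_left' (two_ne_zero), one_div]
      have : (2:ℝ) / C ≤ 1 / C := le_trans h2C this.le
      rw [div_le_div_iff_of_pos_right hC0] at this
      linarith
    have himage : (f '' S) ⊆ insert 0 t := by
      rintro _ ⟨s, hs, rfl⟩
      exact Set.mem_insert_iff.2 (Or.inr (hmemf s hs).1)
    exact Set.Finite.of_finite_image ((htfin.insert 0).subset himage) hinj
  · intro x hx
    refine ⟨rep ⟦(⟨x, hx⟩ : ↥L)⟧, Set.mem_range_self _, ?_⟩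
    have : st.r (Quotient.out ⟦(⟨x, hx⟩ : ↥L)⟧) ⟨x, hx⟩ := Quotient.mk_out _
    exact this.symm
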